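/- arXiv:1209.5069 — 5 statements merged into one kernel-verified Lean document; each statement's English description precedes it below -/
import Mathlib

section
/- Let G = (V, E) be a hypergraph. For every natural number x, the number of proper x-colorings of G equals the sum over all edge subsets A ⊆ E of (-1)^{|A|} · x^{k(G[A])}, where k(G[A]) is the number of connected components of the spanning subgraph G[A] = (V, A). Equivalently, the chromatic polynomial satisfies χ(G, x) = Σ_{A ⊆ E} (-1)^{|A|} x^{k(G[A])}. -/
open scoped Classical

/-- A hypergraph with vertex type `α` and edges indexed by elements of `ι`
(the indexing allows parallel edges, i.e. a multiset of edges). Every edge is a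
nonempty subset of the vertex set. -/
structure IdxHypergraph (α ι : Type*) where
  verts : Finset α
  edges : Finset ι
  inc : ι → Finset α
  inc_nonempty : ∀ i ∈ edges, (inc i).Nonempty
  inc_sub : ∀ i ∈ edges, inc i ⊆ verts

namespace IdxHypergraph

variable {α ι : Type*}

/-- `u` and `v` are connected via a sequence of edges from `E'` in which consecutive
edges share a vertex. -/
def Conn (inc : ι → Finset α) (E' : Finset ι) (u v : α) : Prop :=
  Relation.ReflTransGen (fun a b => ∃ i ∈ E', a ∈ inc i ∧ b ∈ inc i) u v

/-- The number of connected components of the hypergraph with vertex set `V'` and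
edge set `E'` (isolated vertices form their own components). -/
noncomputable def numComponents (inc : ι → Finset α) (V' : Finset α) (E' : Finset ι) : ℕ :=
  (V'.image fun v => V'.filter fun u => Conn inc E' u v).card

/-- `(V₁, E₁)` is a subgraph of `(V₂, E₂)` (w.r.t. the incidence function `inc`). -/
def IsSubgraph (inc : ι → Finset α) (V₁ : Finset α) (E₁ : Finset ι)
    (V₂ : Finset α) (E₂ : Finset ι) : Prop :=
  V₁ ⊆ V₂ ∧ E₁ ⊆ E₂ ∧ ∀ i ∈ E₁, inc i ⊆ V₁

/-- The hypergraph `(V', E')` is δ-cyclic: it has a subgraph with at least one edge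
such that deleting any of its edges does not change the number of connected
components. -/
def IsDeltaCyclic (inc : ι → Finset α) (V' : Finset α) (E' : Finset ι) : Prop :=
  ∃ V'' E'', IsSubgraph inc V'' E'' V' E' ∧ E''.Nonempty ∧
    ∀ i ∈ E'', numComponents inc V'' E'' = numComponents inc V'' (E''.erase i)

/-- The hypergraph `(V', E')` is a δ-cycle: it is δ-cyclic and has no proper
δ-cyclic subgraph. -/
def IsDeltaCycle (inc : ι → Finset α) (V' : Finset α) (E' : Finset ι) : Prop :=
  IsDeltaCyclic inc V' E' ∧
    ∀ V'' E'', IsSubgraph inc V'' E'' V' E' → (V'', E'') ≠ (V', E') →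
      ¬ IsDeltaCyclic inc V'' E''

/-- A proper coloring of `G` with colors in `Fin x`: no edge has all its vertices
mapped to the same color. -/
def ProperColoring (G : IdxHypergraph α ι) (x : ℕ) (φ : G.verts → Fin x) : Prop :=
  ∀ i ∈ G.edges, ¬ ∃ c : Fin x, ∀ v : G.verts, (v : α) ∈ G.inc i → φ v = c

/-- The number of proper `x`-colorings of `G`, i.e. the value `χ(G, x)` of the
chromatic polynomial. -/
noncomputable def chromaticCount (G : IdxHypergraph α ι) (x : ℕ) : ℕ :=
  Nat.card {φ : G.verts → Fin x // G.ProperColoring x φ}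

section Order

variable [LinearOrder ι]

/-- `B` is a broken cycle of `G` w.r.t. the linear order on edges: `B` arises from
deleting the maximal edge of (the edge set of) a δ-cycle that is a subgraph of `G`. -/
def IsBrokenCycle (G : IdxHypergraph α ι) (B : Finset ι) : Prop :=
  ∃ V_C E_C e, IsSubgraph G.inc V_C E_C G.verts G.edges ∧
    IsDeltaCycle G.inc V_C E_C ∧ e ∈ E_C ∧ (∀ i ∈ E_C, i ≤ e) ∧ B = E_C.erase e

/-- The edge `e` closes the broken cycle `B`: `B ∪ {e}` is the edge set of a
δ-cycle in `G`. -/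
def Closes (G : IdxHypergraph α ι) (B : Finset ι) (e : ι) : Prop :=
  ∃ V_C, IsSubgraph G.inc V_C (insert e B) G.verts G.edges ∧
    IsDeltaCycle G.inc V_C (insert e B)

/-- `e` is the minimal edge closing the broken cycle `B`, i.e. `e = e(B)`. -/
def IsMinCloser (G : IdxHypergraph α ι) (B : Finset ι) (e : ι) : Prop :=
  G.Closes B e ∧ ∀ e', G.Closes B e' → e ≤ e'

/-- `e` is the maximal edge closing the broken cycle `B`, i.e. `e = ē(B)`. -/
def IsMaxCloser (G : IdxHypergraph α ι) (B : Finset ι) (e : ι) : Prop :=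
  G.Closes B e ∧ ∀ e', G.Closes B e' → e' ≤ e

/-- `A` contains at least one broken cycle, and
`e = m(A) = min { e(B) : B ∈ 𝔅(G, <), B ⊆ A }`. -/
def IsMinClosingEdge (G : IdxHypergraph α ι) (A : Finset ι) (e : ι) : Prop :=
  (∃ B, G.IsBrokenCycle B ∧ B ⊆ A ∧ G.IsMinCloser B e) ∧
    ∀ B e', G.IsBrokenCycle B → B ⊆ A → G.IsMinCloser B e' → e ≤ e'

end Order

end IdxHypergraph


section Aux

open IdxHypergraph

variable {α ι : Type*}

lemma conn_symm (inc : ι → Finset α) (E' : Finset ι) :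
    Symmetric (Conn inc E') := by
  have h : Symmetric (fun a b => ∃ i ∈ E', a ∈ inc i ∧ b ∈ inc i) := by
    rintro a b ⟨i, hi, ha, hb⟩; exact ⟨i, hi, hb, ha⟩
  intro a b hab
  unfold Conn at hab ⊢
  induction hab with
  | refl => exact Relation.ReflTransGen.refl
  | tail _ hbc ih => exact Relation.ReflTransGen.head (h hbc) ih

lemma card_mono_colorings (G : IdxHypergraph α ι) (x : ℕ) {A : Finset ι}
    (hA : A ⊆ G.edges) :
    (Finset.univ.filter (fun φ : G.verts → Fin x =>
        ∀ i ∈ A, ∃ c : Fin x, ∀ v : G.verts, (v : α) ∈ G.inc i → φ v = c)).card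
      = x ^ numComponents G.inc G.verts A := by
  classical
  have hsymm : Symmetric (Conn G.inc A) := conn_symm G.inc A
  let s : Setoid ↥G.verts := ⟨fun u v => Conn G.inc A ↑u ↑v,
    ⟨fun _ => Relation.ReflTransGen.refl,
     fun h => hsymm h, fun h h' => h.trans h'⟩⟩
  have hmemV : ∀ {i : ι}, i ∈ A → ∀ {v : α}, v ∈ G.inc i → v ∈ G.verts := by
    intro i hi v hv; exact G.inc_sub _ (hA hi) hv
  -- a coloring is monochromatic on all edges of A iff it is constant on components
  have key : ∀ φ : ↥G.verts → Fin x,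
      (∀ i ∈ A, ∃ c : Fin x, ∀ v : ↥G.verts, (v : α) ∈ G.inc i → φ v = c) ↔
      (∀ u v : ↥G.verts, s.r u v → φ u = φ v) := by
    intro φ
    constructor
    · intro hP u v huv
      have general : ∀ u v : α, Conn G.inc A u v →
          ∀ (hu : u ∈ G.verts) (hv : v ∈ G.verts), φ ⟨u, hu⟩ = φ ⟨v, hv⟩ := by
        intro u v h
        induction h with
        | refl => intro hu hv; rfl
        | tail hab step ih =>
          intro hu hv
          obtain ⟨i, hi, hb, hc⟩ := step
          have hbV := hmemV hi hb
          obtain ⟨c, hc'⟩ := hP i hi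
          exact (ih hu hbV).trans ((hc' ⟨_, hbV⟩ hb).trans (hc' ⟨_, hv⟩ hc).symm)
      exact general ↑u ↑v huv u.2 v.2
    · intro hC i hi
      obtain ⟨w, hw⟩ := G.inc_nonempty i (hA hi)
      refine ⟨φ ⟨w, hmemV hi hw⟩, fun v hv => ?_⟩
      exact hC v ⟨w, hmemV hi hw⟩ (Relation.ReflTransGen.single ⟨i, hi, hv, hw⟩)
  -- functions constant on components correspond to functions on the quotient
  let e : {φ : ↥G.verts → Fin x // ∀ u v : ↥G.verts, s.r u v → φ u = φ v} ≃
      (Quotient s → Fin x) :=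
    { toFun := fun φ => Quotient.lift φ.1 φ.2
      invFun := fun g => ⟨fun v => g (Quotient.mk s v),
        fun u v h => congrArg g (Quotient.sound h)⟩
      left_inv := fun φ => Subtype.ext (funext fun v => rfl)
      right_inv := fun g => funext fun q => Quotient.inductionOn q fun v => rfl }
  -- the number of components is the cardinality of the quotient
  have hwell : ∀ a b : ↥G.verts, s.r a b →
      (G.verts.filter fun u => Conn G.inc A u ↑a) =
      (G.verts.filter fun u => Conn G.inc A u ↑b) := by
    intro a b hab
    ext u
    simp only [Finset.mem_filter, and_congr_right_iff]
    exact fun _ => ⟨fun h => h.trans hab, fun h => h.trans (hsymm hab)⟩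
  have hq : Fintype.card (Quotient s) = numComponents G.inc G.verts A := by
    rw [← Finset.card_univ]
    unfold numComponents
    refine Finset.card_bij
      (fun (q : Quotient s) _ =>
        Quotient.lift (fun v : ↥G.verts =>
          G.verts.filter fun u => Conn G.inc A u ↑v) hwell q) ?_ ?_ ?_
    · intro q _
      induction q using Quotient.inductionOn with
      | h v => exact Finset.mem_image.mpr ⟨↑v, v.2, rfl⟩
    · intro q1 h1 q2 h2
      induction q1 using Quotient.inductionOn with
      | h u =>
        induction q2 using Quotient.inductionOn with
        | h v =>
          intro heq
          refine Quotient.sound ?_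
          have heq' : (G.verts.filter fun w => Conn G.inc A w ↑u) =
              (G.verts.filter fun w => Conn G.inc A w ↑v) := heq
          have hu : (u : α) ∈ G.verts.filter fun w => Conn G.inc A w ↑u :=
            Finset.mem_filter.mpr ⟨u.2, Relation.ReflTransGen.refl⟩
          rw [heq'] at hu
          exact (Finset.mem_filter.mp hu).2
    · intro b hb
      obtain ⟨v, hv, rfl⟩ := Finset.mem_image.mp hb
      exact ⟨Quotient.mk s ⟨v, hv⟩, Finset.mem_univ _, rfl⟩
  calc (Finset.univ.filter _).card
      = Fintype.card {φ : ↥G.verts → Fin x //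
          ∀ i ∈ A, ∃ c : Fin x, ∀ v : ↥G.verts, (v : α) ∈ G.inc i → φ v = c} :=
        (Fintype.card_subtype _).symm
    _ = Fintype.card {φ : ↥G.verts → Fin x //
          ∀ u v : ↥G.verts, s.r u v → φ u = φ v} :=
        Fintype.card_congr (Equiv.subtypeEquivRight key)
    _ = Fintype.card (Quotient s → Fin x) := Fintype.card_congr e
    _ = x ^ Fintype.card (Quotient s) := by
        rw [Fintype.card_fun, Fintype.card_fin]
    _ = x ^ numComponents G.inc G.verts A := by rw [hq]

end Aux

open IdxHypergraph in
/-- Edge subset expansion of the chromatic polynomial of a hypergraph: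
`χ(G, x) = Σ_{A ⊆ E} (-1)^{|A|} x^{k(G[A])}`. -/
theorem chromaticCount_eq_sum_powerset {α ι : Type*} (G : IdxHypergraph α ι) (x : ℕ) :
    (G.chromaticCount x : ℤ) =
      ∑ A ∈ G.edges.powerset,
        (-1 : ℤ) ^ A.card * (x : ℤ) ^ numComponents G.inc G.verts A := by
  classical
  have hcount : ∀ A ∈ G.edges.powerset,
      (-1 : ℤ) ^ A.card * (x : ℤ) ^ numComponents G.inc G.verts A =
      (-1 : ℤ) ^ A.card * ((Finset.univ.filter (fun φ : G.verts → Fin x =>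
        ∀ i ∈ A, ∃ c : Fin x, ∀ v : G.verts, (v : α) ∈ G.inc i → φ v = c)).card : ℤ) := by
    intro A hAp
    rw [card_mono_colorings G x (Finset.mem_powerset.mp hAp)]
    push_cast
    ring
  rw [Finset.sum_congr rfl hcount]
  have expand : ∀ A ∈ G.edges.powerset,
      (-1 : ℤ) ^ A.card * ((Finset.univ.filter (fun φ : G.verts → Fin x =>
        ∀ i ∈ A, ∃ c : Fin x, ∀ v : G.verts, (v : α) ∈ G.inc i → φ v = c)).card : ℤ)
      = ∑ φ : G.verts → Fin x,
          (if ∀ i ∈ A, ∃ c : Fin x, ∀ v : G.verts, (v : α) ∈ G.inc i → φ v = c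
           then (-1 : ℤ) ^ A.card else 0) := by
    intro A _
    rw [Finset.card_filter]
    push_cast
    rw [Finset.mul_sum]
    refine Finset.sum_congr rfl fun φ _ => ?_
    split <;> simp
  rw [Finset.sum_congr rfl expand, Finset.sum_comm]
  have inner : ∀ φ : G.verts → Fin x,
      (∑ A ∈ G.edges.powerset,
        if ∀ i ∈ A, ∃ c : Fin x, ∀ v : G.verts, (v : α) ∈ G.inc i → φ v = c
        then (-1 : ℤ) ^ A.card else 0)
      = if G.ProperColoring x φ then 1 else 0 := by
    intro φ
    rw [Finset.sum_ite, Finset.sum_const, smul_zero, add_zero]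
    have hps : G.edges.powerset.filter
        (fun A => ∀ i ∈ A, ∃ c : Fin x, ∀ v : G.verts, (v : α) ∈ G.inc i → φ v = c)
        = (G.edges.filter
            (fun i => ∃ c : Fin x, ∀ v : G.verts, (v : α) ∈ G.inc i → φ v = c)).powerset := by
      ext B
      simp only [Finset.mem_filter, Finset.mem_powerset]
      constructor
      · rintro ⟨h1, h2⟩ a ha
        exact Finset.mem_filter.mpr ⟨h1 ha, h2 a ha⟩
      · intro h
        exact ⟨fun a ha => (Finset.mem_filter.mp (h ha)).1,
          fun i hi => (Finset.mem_filter.mp (h hi)).2⟩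
    rw [hps, Finset.sum_powerset_neg_one_pow_card]
    congr 1
    rw [Finset.filter_eq_empty_iff]
    rfl
  rw [Finset.sum_congr rfl fun φ _ => inner φ, Finset.sum_boole]
  rw [IdxHypergraph.chromaticCount, Nat.card_eq_fintype_card, Fintype.card_subtype]
end

section
/- Let G = (V, E) be a hypergraph with a linear order < on the edge set E. Then for every natural number x, the chromatic polynomial satisfies χ(G, x) = Σ_{A ⊆ E, A contains no broken cycle} (-1)^{|A|} x^{k(G[A])}, where the sum ranges over all edge subsets A ⊆ E such that B ⊄ A for every broken cycle B ∈ 𝔅(G, <). -/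
open scoped Classical

namespace IdxHypergraph

variable {α ι : Type*}

lemma conn_mono {inc : ι → Finset α} {E₁ E₂ : Finset ι} (h : E₁ ⊆ E₂) {u v : α}
    (hc : Conn inc E₁ u v) : Conn inc E₂ u v :=
  Relation.ReflTransGen.mono (r := fun a b => ∃ i ∈ E₁, a ∈ inc i ∧ b ∈ inc i)
    (p := fun a b => ∃ i ∈ E₂, a ∈ inc i ∧ b ∈ inc i)
    (fun _ _ hab => hab.imp fun _ hi => ⟨h hi.1, hi.2⟩) _ _ hc

lemma conn_symm {inc : ι → Finset α} {E' : Finset ι} {u v : α}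
    (hc : Conn inc E' u v) : Conn inc E' v u :=
  (@Relation.ReflTransGen.stdSymm _ (fun a b => ∃ i ∈ E', a ∈ inc i ∧ b ∈ inc i)
    ⟨fun _ _ hab => hab.imp fun _ hi => ⟨hi.1, hi.2.2, hi.2.1⟩⟩).symm _ _ hc

lemma numComponents_congr {inc : ι → Finset α} {V' : Finset α} {E₁ E₂ : Finset ι}
    (h : ∀ u v, Conn inc E₁ u v ↔ Conn inc E₂ u v) :
    numComponents inc V' E₁ = numComponents inc V' E₂ := by
  unfold numComponents
  congr 1
  apply Finset.image_congr
  intro v _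
  exact Finset.filter_congr fun u _ => h u v

lemma conn_of_numComponents_eq [DecidableEq ι] {inc : ι → Finset α} {V' : Finset α} {E' : Finset ι} {e : ι}
    (hcount : numComponents inc V' E' = numComponents inc V' (E'.erase e))
    {u v : α} (hu : u ∈ V') (hv : v ∈ V') (hc : Conn inc E' u v) :
    Conn inc (E'.erase e) u v := by
  classical
  unfold numComponents at hcount
  set g : α → Finset α := fun v => V'.filter fun u => Conn inc (E'.erase e) u v with hg
  set f : α → Finset α := fun v => V'.filter fun u => Conn inc E' u v with hf
  set F : Finset α → Finset α := fun S => V'.filter fun u => ∃ w ∈ S, Conn inc E' u w with hF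
  have hFg : ∀ v ∈ V', F (g v) = f v := by
    intro v hvV
    ext u
    simp only [hF, hg, hf, Finset.mem_filter]
    constructor
    · rintro ⟨huV, w, hw, hcw⟩
      exact ⟨huV, hcw.trans (conn_mono (Finset.erase_subset _ _) hw.2)⟩
    · rintro ⟨huV, hcv⟩
      exact ⟨huV, v, ⟨hvV, Relation.ReflTransGen.refl⟩, hcv⟩
  have himg : (V'.image g).image F = V'.image f := by
    rw [Finset.image_image]
    exact Finset.image_congr fun v hv => hFg v hv
  have hcard : ((V'.image g).image F).card = (V'.image g).card := by
    rw [himg]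
    exact hcount
  have hinj : Set.InjOn F (V'.image g) := Finset.injOn_of_card_image_eq hcard
  have hfg : f u = f v := by
    ext w
    simp only [hf, Finset.mem_filter, and_congr_right_iff]
    exact fun _ => ⟨fun hw => hw.trans hc, fun hw => hw.trans (conn_symm hc)⟩
  have hFeq : F (g u) = F (g v) := by rw [hFg u hu, hFg v hv, hfg]
  have hgu : g u = g v :=
    hinj (Finset.mem_coe.2 (Finset.mem_image_of_mem g hu))
      (Finset.mem_coe.2 (Finset.mem_image_of_mem g hv)) hFeq
  have humem : u ∈ g v := hgu ▸ (Finset.mem_filter.2 ⟨hu, Relation.ReflTransGen.refl⟩)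
  exact (Finset.mem_filter.1 humem).2

lemma erase_inst_indep (i1 i2 : DecidableEq ι) (s : Finset ι) (a : ι) :
    @Finset.erase ι i1 s a = @Finset.erase ι i2 s a := by
  haveI : Subsingleton (DecidableEq ι) :=
    ⟨fun d1 d2 => funext fun a => funext fun b => Subsingleton.elim _ _⟩
  cases Subsingleton.elim i1 i2
  rfl

lemma IsDeltaCycle.numComponents_erase [DecidableEq ι] {inc : ι → Finset α} {V' : Finset α}
    {E' : Finset ι} (h : IsDeltaCycle inc V' E') {i : ι} (hi : i ∈ E') :
    numComponents inc V' E' = numComponents inc V' (E'.erase i) := by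
  obtain ⟨⟨V'', E'', hsub, hne, hdel⟩, hmin⟩ := h
  have heq : (V'', E'') = (V', E') := by
    by_contra hne'
    exact hmin V'' E'' hsub hne'
      ⟨V'', E'', ⟨Finset.Subset.refl _, Finset.Subset.refl _, hsub.2.2⟩, hne, hdel⟩
  rw [Prod.mk.injEq] at heq
  obtain ⟨rfl, rfl⟩ := heq
  exact (hdel i hi).trans (congrArg (numComponents inc _) (erase_inst_indep _ _ _ i))

lemma conn_erase_of_deltaCycle [DecidableEq ι] {inc : ι → Finset α} {V' : Finset α} {E' : Finset ι}
    (h : IsDeltaCycle inc V' E') {e : ι} (he : e ∈ E')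
    {u v : α} (hu : u ∈ V') (hv : v ∈ V') (hc : Conn inc E' u v) :
    Conn inc (E'.erase e) u v :=
  conn_of_numComponents_eq (h.numComponents_erase he) hu hv hc

lemma conn_insert_iff [DecidableEq ι] {inc : ι → Finset α} {A : Finset ι} {e : ι}
    (h : ∀ a b, a ∈ inc e → b ∈ inc e → Conn inc A a b) (u v : α) :
    Conn inc (insert e A) u v ↔ Conn inc A u v := by
  constructor
  · intro hc
    induction hc with
    | refl => exact Relation.ReflTransGen.refl
    | tail hab hbc ih =>
        obtain ⟨i, hi, hb, hc'⟩ := hbc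
        rcases Finset.mem_insert.1 hi with rfl | hiA
        · exact ih.trans (h _ _ hb hc')
        · exact ih.tail ⟨i, hiA, hb, hc'⟩
  · exact conn_mono (Finset.subset_insert _ _)

lemma numComponents_insert_eq [DecidableEq ι] {inc : ι → Finset α} {V' V_C : Finset α} {A B : Finset ι} {e : ι}
    (hcyc : IsDeltaCycle inc V_C (insert e B)) (hinc : ∀ i ∈ insert e B, inc i ⊆ V_C)
    (hBA : B ⊆ A) :
    numComponents inc V' (insert e A) = numComponents inc V' A := by
  have key : ∀ a b, a ∈ inc e → b ∈ inc e → Conn inc A a b := by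
    intro a b ha hb
    have haV : a ∈ V_C := hinc e (Finset.mem_insert_self e B) ha
    have hbV : b ∈ V_C := hinc e (Finset.mem_insert_self e B) hb
    have h1 : Conn inc (insert e B) a b :=
      Relation.ReflTransGen.single ⟨e, Finset.mem_insert_self e B, ha, hb⟩
    have h2 : Conn inc ((insert e B).erase e) a b :=
      conn_erase_of_deltaCycle hcyc (Finset.mem_insert_self e B) haV hbV h1
    exact conn_mono ((Finset.erase_insert_subset e B).trans hBA) h2
  exact numComponents_congr (conn_insert_iff key)

lemma card_mono_colorings (G : IdxHypergraph α ι) (x : ℕ) {A : Finset ι} (hA : A ⊆ G.edges) :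
    (Finset.univ.filter fun φ : G.verts → Fin x =>
        ∀ i ∈ A, ∃ c : Fin x, ∀ v : G.verts, (v : α) ∈ G.inc i → φ v = c).card
      = x ^ numComponents G.inc G.verts A := by
  classical
  set cmap : α → Finset α := fun v => G.verts.filter fun u => Conn G.inc A u v with hcmap
  set K : Finset (Finset α) := G.verts.image cmap with hK
  have hchar : ∀ φ : G.verts → Fin x,
      (∀ i ∈ A, ∃ c : Fin x, ∀ v : G.verts, (v : α) ∈ G.inc i → φ v = c) ↔
      (∀ u v : G.verts, Conn G.inc A (u : α) (v : α) → φ u = φ v) := by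
    intro φ
    constructor
    · intro hmono u v hc
      have main : ∀ a b : α, Conn G.inc A a b →
          ∀ (ha : a ∈ G.verts) (hb : b ∈ G.verts), φ ⟨a, ha⟩ = φ ⟨b, hb⟩ := by
        intro a b hab
        induction hab with
        | refl => intro ha hb; rfl
        | tail hab' hbc ih =>
            intro ha hcmem
            obtain ⟨i, hiA, hbmem, hcm⟩ := hbc
            have hbV : _ ∈ G.verts := G.inc_sub i (hA hiA) hbmem
            obtain ⟨col, hcol⟩ := hmono i hiA
            exact (ih ha hbV).trans ((hcol ⟨_, hbV⟩ hbmem).trans (hcol ⟨_, hcmem⟩ hcm).symm)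
      exact main _ _ hc u.2 v.2
    · intro hconst i hiA
      obtain ⟨v₀, hv₀⟩ := G.inc_nonempty i (hA hiA)
      have hv₀V := G.inc_sub i (hA hiA) hv₀
      exact ⟨φ ⟨v₀, hv₀V⟩, fun v hv =>
        hconst v ⟨v₀, hv₀V⟩ (Relation.ReflTransGen.single ⟨i, hiA, hv, hv₀⟩)⟩
  have hcm : ∀ u v : G.verts, cmap (u : α) = cmap (v : α) ↔ Conn G.inc A (u : α) (v : α) := by
    intro u v
    constructor
    · intro h
      have : (u : α) ∈ cmap (v : α) := h ▸ Finset.mem_filter.2 ⟨u.2, Relation.ReflTransGen.refl⟩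
      exact (Finset.mem_filter.1 this).2
    · intro h
      ext w
      simp only [hcmap, Finset.mem_filter, and_congr_right_iff]
      exact fun _ => ⟨fun hw => hw.trans h, fun hw => hw.trans (conn_symm h)⟩
  set q : G.verts → {S // S ∈ K} := fun v => ⟨cmap (v : α), Finset.mem_image_of_mem _ v.2⟩ with hq
  have hrep : ∀ S : {S // S ∈ K}, ∃ v : G.verts, cmap (v : α) = (S : Finset α) := by
    intro S
    obtain ⟨a, haV, ha⟩ := Finset.mem_image.1 S.2
    exact ⟨⟨a, haV⟩, ha⟩
  choose rep hrepeq using hrep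
  have hbij : (Finset.univ.filter fun φ : G.verts → Fin x =>
        ∀ i ∈ A, ∃ c : Fin x, ∀ v : G.verts, (v : α) ∈ G.inc i → φ v = c).card
      = (Finset.univ : Finset ({S // S ∈ K} → Fin x)).card := by
    apply Finset.card_bij' (fun φ _ => fun S => φ (rep S)) (fun ψ _ => fun v => ψ (q v))
    · intro φ hφ
      exact Finset.mem_univ _
    · intro ψ hψ
      rw [Finset.mem_filter]
      refine ⟨Finset.mem_univ _, (hchar _).2 fun u v hconn => ?_⟩
      have : q u = q v := Subtype.ext ((hcm u v).2 hconn)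
      rw [this]
    · intro φ hφ
      rw [Finset.mem_filter] at hφ
      funext v
      have h1 : cmap ((rep (q v)) : α) = cmap (v : α) := hrepeq (q v)
      exact (hchar φ).1 hφ.2 _ _ ((hcm _ _).1 h1)
    · intro ψ hψ
      funext S
      show ψ (q (rep S)) = ψ S
      have hqs : q (rep S) = S := Subtype.ext (hrepeq S)
      rw [hqs]
  rw [hbij, Finset.card_univ, Fintype.card_fun, Fintype.card_fin, Fintype.card_coe]
  rfl

lemma chromaticCount_eq_alternating_sum (G : IdxHypergraph α ι) (x : ℕ) :
    (G.chromaticCount x : ℤ) =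
      ∑ A ∈ G.edges.powerset,
        (-1 : ℤ) ^ A.card * (x : ℤ) ^ numComponents G.inc G.verts A := by
  classical
  set Mono : (G.verts → Fin x) → ι → Prop :=
    fun φ i => ∃ c : Fin x, ∀ v : G.verts, (v : α) ∈ G.inc i → φ v = c with hMono
  symm
  calc ∑ A ∈ G.edges.powerset, (-1 : ℤ) ^ A.card * (x:ℤ) ^ numComponents G.inc G.verts A
      = ∑ A ∈ G.edges.powerset, ∑ φ : G.verts → Fin x,
          (if ∀ i ∈ A, Mono φ i then (-1:ℤ)^A.card else 0) := by
        refine Finset.sum_congr rfl fun A hA => ?_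
        rw [show ((x:ℤ) ^ numComponents G.inc G.verts A)
              = ((x ^ numComponents G.inc G.verts A : ℕ) : ℤ) by push_cast; ring]
        rw [← card_mono_colorings G x (Finset.mem_powerset.1 hA), Finset.card_filter]
        push_cast
        rw [Finset.mul_sum]
        refine Finset.sum_congr rfl fun φ _ => ?_
        by_cases h : ∀ i ∈ A, Mono φ i <;> simp [h, hMono]
    _ = ∑ φ : G.verts → Fin x, ∑ A ∈ G.edges.powerset,
          (if ∀ i ∈ A, Mono φ i then (-1:ℤ)^A.card else 0) := Finset.sum_comm
    _ = ∑ φ : G.verts → Fin x, (if G.ProperColoring x φ then (1:ℤ) else 0) := by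
        refine Finset.sum_congr rfl fun φ _ => ?_
        rw [← Finset.sum_filter]
        have hps : (G.edges.powerset.filter fun A => ∀ i ∈ A, Mono φ i)
            = (G.edges.filter (Mono φ)).powerset := by
          ext A
          simp only [Finset.mem_filter, Finset.mem_powerset]
          constructor
          · rintro ⟨hsub, h⟩
            exact fun i hi => Finset.mem_filter.2 ⟨hsub hi, h i hi⟩
          · intro h
            exact ⟨h.trans (Finset.filter_subset _ _),
              fun i hi => (Finset.mem_filter.1 (h hi)).2⟩
        rw [hps, Finset.sum_powerset_neg_one_pow_card]
        have hiff : (G.edges.filter (Mono φ) = ∅) ↔ G.ProperColoring x φ := by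
          rw [Finset.filter_eq_empty_iff]
          exact Iff.rfl
        rw [if_congr hiff rfl rfl]
    _ = (G.chromaticCount x : ℤ) := by
        rw [Finset.sum_boole]
        unfold chromaticCount
        rw [Nat.card_eq_fintype_card, Fintype.card_subtype]

section Order

variable [LinearOrder ι]

lemma IsBrokenCycle.subset_edges {G : IdxHypergraph α ι} {B : Finset ι}
    (h : G.IsBrokenCycle B) : B ⊆ G.edges := by
  obtain ⟨V_C, E_C, e, hsub, -, -, -, rfl⟩ := h
  exact (Finset.erase_subset e E_C).trans hsub.2.1

lemma IsBrokenCycle.exists_spec {G : IdxHypergraph α ι} {B : Finset ι}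
    (h : G.IsBrokenCycle B) :
    ∃ e, e ∉ B ∧ insert e B ⊆ G.edges ∧ (∀ i ∈ B, i < e) ∧
      ∃ V_C, (∀ i ∈ insert e B, G.inc i ⊆ V_C) ∧ IsDeltaCycle G.inc V_C (insert e B) := by
  obtain ⟨V_C, E_C, e, hsub, hcyc, heE, hmax, rfl⟩ := h
  have hins : insert e (E_C.erase e) = E_C := Finset.insert_erase heE
  refine ⟨e, Finset.notMem_erase e E_C, ?_, ?_, V_C, ?_, ?_⟩
  · rw [hins]; exact hsub.2.1
  · intro i hi
    exact lt_of_le_of_ne (hmax i (Finset.mem_of_mem_erase hi)) (Finset.ne_of_mem_erase hi)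
  · rw [hins]; exact hsub.2.2
  · rw [hins]; exact hcyc

set_option maxHeartbeats 1000000 in
lemma sum_bad_eq_zero (G : IdxHypergraph α ι) (x : ℕ)
    (ebar : Finset ι → ι)
    (hbar : ∀ B, G.IsBrokenCycle B → ebar B ∉ B ∧ insert (ebar B) B ⊆ G.edges ∧
      (∀ i ∈ B, i < ebar B) ∧ ∃ V_C, (∀ i ∈ insert (ebar B) B, G.inc i ⊆ V_C) ∧
        IsDeltaCycle G.inc V_C (insert (ebar B) B))
    (rest : Finset (Finset ι)) :
    ∀ done : Finset (Finset ι), (∀ B ∈ rest, G.IsBrokenCycle B) →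
      (∀ B ∈ done, G.IsBrokenCycle B) →
      (∀ B ∈ done, ∀ B' ∈ rest, ebar B ≤ ebar B') →
      ∑ A ∈ G.edges.powerset.filter
          (fun A => (∀ B ∈ done, ¬ B ⊆ A) ∧ ∃ B' ∈ rest, B' ⊆ A),
        (-1 : ℤ) ^ A.card * (x : ℤ) ^ numComponents G.inc G.verts A = 0 := by
  classical
  induction rest using Finset.strongInduction with
  | _ rest ih =>
    intro done hrest hdone hord
    rcases rest.eq_empty_or_nonempty with rfl | hne
    · rw [Finset.filter_false_of_mem, Finset.sum_empty]
      rintro A hA ⟨-, B', hB', -⟩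
      exact absurd hB' (Finset.notMem_empty B')
    obtain ⟨B, hBrest, hBmin⟩ := rest.exists_min_image ebar hne
    obtain ⟨heB, hins, hlt, V_C, hincC, hcyc⟩ := hbar B (hrest B hBrest)
    have hsplit : G.edges.powerset.filter
          (fun A => (∀ B₀ ∈ done, ¬ B₀ ⊆ A) ∧ ∃ B' ∈ rest, B' ⊆ A)
        = G.edges.powerset.filter (fun A => (∀ B₀ ∈ done, ¬ B₀ ⊆ A) ∧ B ⊆ A)
          ∪ G.edges.powerset.filter
            (fun A => (∀ B₀ ∈ insert B done, ¬ B₀ ⊆ A) ∧ ∃ B' ∈ rest.erase B, B' ⊆ A) := by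
      ext A
      simp only [Finset.mem_union, Finset.mem_filter, Finset.forall_mem_insert]
      by_cases hBA : B ⊆ A
      · constructor
        · rintro ⟨hAE, hQ, -⟩
          exact Or.inl ⟨hAE, hQ, hBA⟩
        · rintro (⟨hAE, hQ, -⟩ | ⟨hAE, ⟨hnB, hQ⟩, -⟩)
          · exact ⟨hAE, hQ, B, hBrest, hBA⟩
          · exact absurd hBA hnB
      · constructor
        · rintro ⟨hAE, hQ, B', hB', hB'A⟩
          refine Or.inr ⟨hAE, ⟨hBA, hQ⟩, B', Finset.mem_erase.2 ⟨?_, hB'⟩, hB'A⟩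
          rintro rfl
          exact hBA hB'A
        · rintro (⟨hAE, hQ, hBA'⟩ | ⟨hAE, ⟨hnB, hQ⟩, B', hB', hB'A⟩)
          · exact absurd hBA' hBA
          · exact ⟨hAE, hQ, B', Finset.mem_of_mem_erase hB', hB'A⟩
    rw [hsplit, Finset.sum_union]
    · have hsum2 : ∑ A ∈ G.edges.powerset.filter
            (fun A => (∀ B₀ ∈ insert B done, ¬ B₀ ⊆ A) ∧ ∃ B' ∈ rest.erase B, B' ⊆ A),
          (-1 : ℤ) ^ A.card * (x : ℤ) ^ numComponents G.inc G.verts A = 0 := by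
        refine ih (rest.erase B) (Finset.erase_ssubset hBrest) (insert B done)
          (fun B' hB' => hrest B' (Finset.mem_of_mem_erase hB')) ?_ ?_
        · intro B₀ hB₀
          rcases Finset.mem_insert.1 hB₀ with rfl | h
          · exact hrest B₀ hBrest
          · exact hdone B₀ h
        · intro B₀ hB₀ B' hB'
          rcases Finset.mem_insert.1 hB₀ with rfl | h
          · exact hBmin B' (Finset.mem_of_mem_erase hB')
          · exact hord B₀ h B' (Finset.mem_of_mem_erase hB')
      have hsum1 : ∑ A ∈ G.edges.powerset.filter
            (fun A => (∀ B₀ ∈ done, ¬ B₀ ⊆ A) ∧ B ⊆ A),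
          (-1 : ℤ) ^ A.card * (x : ℤ) ^ numComponents G.inc G.verts A = 0 := by
        refine Finset.sum_involution
          (fun A _ => if ebar B ∈ A then A.erase (ebar B) else insert (ebar B) A)
          ?_ ?_ ?_ ?_
        · intro A hA
          obtain ⟨hAE, hQ, hBA⟩ :
              A ⊆ G.edges ∧ (∀ B₀ ∈ done, ¬ B₀ ⊆ A) ∧ B ⊆ A := by
            have := Finset.mem_filter.1 hA
            exact ⟨Finset.mem_powerset.1 this.1, this.2.1, this.2.2⟩
          by_cases heA : ebar B ∈ A
          · simp only [if_pos heA]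
            have hBA' : B ⊆ A.erase (ebar B) := fun i hi =>
              Finset.mem_erase.2 ⟨ne_of_lt (hlt i hi), hBA hi⟩
            have hnum : numComponents G.inc G.verts (insert (ebar B) (A.erase (ebar B)))
                = numComponents G.inc G.verts (A.erase (ebar B)) :=
              numComponents_insert_eq hcyc hincC hBA'
            rw [Finset.insert_erase heA] at hnum
            rw [hnum, show A.card = (A.erase (ebar B)).card + 1 from
              (Finset.card_erase_add_one heA).symm, pow_succ]
            ring
          · simp only [if_neg heA]
            have hnum : numComponents G.inc G.verts (insert (ebar B) A)
                = numComponents G.inc G.verts A :=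
              numComponents_insert_eq hcyc hincC hBA
            rw [hnum, Finset.card_insert_of_notMem heA, pow_succ]
            ring
        · intro A _ _
          by_cases heA : ebar B ∈ A
          · simp only [if_pos heA]
            intro hEq
            exact (hEq ▸ Finset.notMem_erase (ebar B) A) heA
          · simp only [if_neg heA]
            intro hEq
            exact heA (hEq ▸ Finset.mem_insert_self (ebar B) A)
        · intro A hA
          obtain ⟨hAE, hQ, hBA⟩ :
              A ⊆ G.edges ∧ (∀ B₀ ∈ done, ¬ B₀ ⊆ A) ∧ B ⊆ A := by
            have := Finset.mem_filter.1 hA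
            exact ⟨Finset.mem_powerset.1 this.1, this.2.1, this.2.2⟩
          rw [Finset.mem_filter, Finset.mem_powerset]
          by_cases heA : ebar B ∈ A
          · simp only [if_pos heA]
            exact ⟨(Finset.erase_subset _ A).trans hAE,
              fun B₀ hB₀ hsub => hQ B₀ hB₀ (hsub.trans (Finset.erase_subset _ A)),
              fun i hi => Finset.mem_erase.2 ⟨ne_of_lt (hlt i hi), hBA hi⟩⟩
          · simp only [if_neg heA]
            refine ⟨Finset.insert_subset (hins (Finset.mem_insert_self _ B)) hAE, ?_,
              hBA.trans (Finset.subset_insert _ A)⟩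
            intro B₀ hB₀ hsub
            by_cases heB₀ : ebar B ∈ B₀
            · have h1 : ebar B < ebar B₀ := (hbar B₀ (hdone B₀ hB₀)).2.2.1 (ebar B) heB₀
              have h2 : ebar B₀ ≤ ebar B := hord B₀ hB₀ B hBrest
              exact absurd h1 (not_lt.2 h2)
            · refine hQ B₀ hB₀ fun i hi => ?_
              rcases Finset.mem_insert.1 (hsub hi) with rfl | h
              · exact absurd hi heB₀
              · exact h
        · intro A _
          by_cases heA : ebar B ∈ A
          · simp only [if_pos heA, if_neg (Finset.notMem_erase (ebar B) A)]
            exact Finset.insert_erase heA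
          · simp only [if_neg heA, if_pos (Finset.mem_insert_self (ebar B) A)]
            exact Finset.erase_insert heA
      rw [hsum1, hsum2, add_zero]
    · rw [Finset.disjoint_left]
      intro A h1 h2
      rw [Finset.mem_filter] at h1 h2
      exact (h2.2.1 B (Finset.mem_insert_self B done)) h1.2.2

end Order

end IdxHypergraph


open IdxHypergraph in
/-- Broken-cycle Theorem for hypergraphs:
`χ(G, x) = Σ_{A ⊆ E, no broken cycle ⊆ A} (-1)^{|A|} x^{k(G[A])}`. -/
theorem chromaticCount_eq_sum_brokenCycleFree {α ι : Type*} [LinearOrder ι]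
    (G : IdxHypergraph α ι) (x : ℕ) :
    (G.chromaticCount x : ℤ) =
      ∑ A ∈ G.edges.powerset.filter fun A => ∀ B, G.IsBrokenCycle B → ¬ B ⊆ A,
        (-1 : ℤ) ^ A.card * (x : ℤ) ^ numComponents G.inc G.verts A := by
  classical
  rw [IdxHypergraph.chromaticCount_eq_alternating_sum]
  rw [← Finset.sum_filter_add_sum_filter_not G.edges.powerset
      (fun A => ∀ B, G.IsBrokenCycle B → ¬ B ⊆ A)]
  suffices h0 : ∑ A ∈ G.edges.powerset.filter
      (fun A => ¬ ∀ B, G.IsBrokenCycle B → ¬ B ⊆ A),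
      (-1 : ℤ) ^ A.card * (x : ℤ) ^ numComponents G.inc G.verts A = 0 by
    rw [h0, add_zero]
  by_cases hne : (G.edges.powerset.filter
      fun A => ¬ ∀ B, G.IsBrokenCycle B → ¬ B ⊆ A).Nonempty
  · obtain ⟨A₀, hA₀⟩ := hne
    rw [Finset.mem_filter] at hA₀
    have hA₀' := hA₀.2
    push_neg at hA₀'
    obtain ⟨B₀, hB₀, hB₀A⟩ := hA₀'
    obtain ⟨e₀, -⟩ := hB₀.exists_spec
    haveI : Nonempty ι := ⟨e₀⟩
    have H : ∀ B, G.IsBrokenCycle B → ∃ e, e ∉ B ∧ insert e B ⊆ G.edges ∧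
        (∀ i ∈ B, i < e) ∧ ∃ V_C, (∀ i ∈ insert e B, G.inc i ⊆ V_C) ∧
          IsDeltaCycle G.inc V_C (insert e B) := fun B h => h.exists_spec
    choose! ebar hbar using H
    have hset : G.edges.powerset.filter (fun A => ¬ ∀ B, G.IsBrokenCycle B → ¬ B ⊆ A)
        = G.edges.powerset.filter (fun A => (∀ B ∈ (∅ : Finset (Finset ι)), ¬ B ⊆ A) ∧
            ∃ B' ∈ G.edges.powerset.filter (fun B => G.IsBrokenCycle B), B' ⊆ A) := by
      ext A
      rw [Finset.mem_filter, Finset.mem_filter]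
      refine and_congr_right fun hAE => ?_
      constructor
      · intro hnot
        push_neg at hnot
        obtain ⟨B, hB, hBA⟩ := hnot
        exact ⟨fun B₀ hB₀ => absurd hB₀ (Finset.notMem_empty B₀), B,
          Finset.mem_filter.2 ⟨Finset.mem_powerset.2 hB.subset_edges, hB⟩, hBA⟩
      · rintro ⟨-, B, hBf, hBA⟩ hall
        exact hall B (Finset.mem_filter.1 hBf).2 hBA
    rw [hset]
    exact IdxHypergraph.sum_bad_eq_zero G x ebar hbar _ ∅
      (fun B hB => (Finset.mem_filter.1 hB).2)
      (fun B hB => absurd hB (Finset.notMem_empty B))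
      (fun B hB => absurd hB (Finset.notMem_empty B))
  · rw [Finset.not_nonempty_iff_eq_empty] at hne
    rw [hne, Finset.sum_empty]
end

section
/- Let G = (V, E) be a hypergraph, let A ⊆ E, and let e ∈ E \ A. Suppose C = (V_C, E_C) is a δ-cycle that is a subgraph of G with e ∈ E_C and E_C ⊆ A ∪ {e}. Then k(G[A]) = k(G[A ∪ {e}]), i.e., deleting e from the spanning subgraph G[A ∪ {e}] does not change the number of connected components. -/
open scoped Classical

/-- A hypergraph with vertex type `α` and edges indexed by elements of `ι`
(the indexing allows parallel edges, i.e. a multiset of edges). Every edge is a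
nonempty subset of the vertex set. -/
structure Hypergraph' (α ι : Type*) where
  verts : Finset α
  edges : Finset ι
  inc : ι → Finset α
  inc_nonempty : ∀ i ∈ edges, (inc i).Nonempty
  inc_sub : ∀ i ∈ edges, inc i ⊆ verts

namespace Hypergraph'

variable {α ι : Type*}

/-- `u` and `v` are connected via a sequence of edges from `E'` in which consecutive
edges share a vertex. -/
def Conn (inc : ι → Finset α) (E' : Finset ι) (u v : α) : Prop :=
  Relation.ReflTransGen (fun a b => ∃ i ∈ E', a ∈ inc i ∧ b ∈ inc i) u v

/-- The number of connected components of the hypergraph with vertex set `V'` and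
edge set `E'` (isolated vertices form their own components). -/
noncomputable def numComponents (inc : ι → Finset α) (V' : Finset α) (E' : Finset ι) : ℕ :=
  (V'.image fun v => V'.filter fun u => Conn inc E' u v).card

/-- `(V₁, E₁)` is a subgraph of `(V₂, E₂)` (w.r.t. the incidence function `inc`). -/
def IsSubgraph (inc : ι → Finset α) (V₁ : Finset α) (E₁ : Finset ι)
    (V₂ : Finset α) (E₂ : Finset ι) : Prop :=
  V₁ ⊆ V₂ ∧ E₁ ⊆ E₂ ∧ ∀ i ∈ E₁, inc i ⊆ V₁

/-- The hypergraph `(V', E')` is δ-cyclic: it has a subgraph with at least one edge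
such that deleting any of its edges does not change the number of connected
components. -/
def IsDeltaCyclic (inc : ι → Finset α) (V' : Finset α) (E' : Finset ι) : Prop :=
  ∃ V'' E'', IsSubgraph inc V'' E'' V' E' ∧ E''.Nonempty ∧
    ∀ i ∈ E'', numComponents inc V'' E'' = numComponents inc V'' (E''.erase i)

/-- The hypergraph `(V', E')` is a δ-cycle: it is δ-cyclic and has no proper
δ-cyclic subgraph. -/
def IsDeltaCycle (inc : ι → Finset α) (V' : Finset α) (E' : Finset ι) : Prop :=
  IsDeltaCyclic inc V' E' ∧
    ∀ V'' E'', IsSubgraph inc V'' E'' V' E' → (V'', E'') ≠ (V', E') →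
      ¬ IsDeltaCyclic inc V'' E''

/-- A proper coloring of `G` with colors in `Fin x`: no edge has all its vertices
mapped to the same color. -/
def ProperColoring (G : Hypergraph' α ι) (x : ℕ) (φ : G.verts → Fin x) : Prop :=
  ∀ i ∈ G.edges, ¬ ∃ c : Fin x, ∀ v : G.verts, (v : α) ∈ G.inc i → φ v = c

/-- The number of proper `x`-colorings of `G`, i.e. the value `χ(G, x)` of the
chromatic polynomial. -/
noncomputable def chromaticCount (G : Hypergraph' α ι) (x : ℕ) : ℕ :=
  Nat.card {φ : G.verts → Fin x // G.ProperColoring x φ}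

section Order

variable [LinearOrder ι]

/-- `B` is a broken cycle of `G` w.r.t. the linear order on edges: `B` arises from
deleting the maximal edge of (the edge set of) a δ-cycle that is a subgraph of `G`. -/
def IsBrokenCycle (G : Hypergraph' α ι) (B : Finset ι) : Prop :=
  ∃ V_C E_C e, IsSubgraph G.inc V_C E_C G.verts G.edges ∧
    IsDeltaCycle G.inc V_C E_C ∧ e ∈ E_C ∧ (∀ i ∈ E_C, i ≤ e) ∧ B = E_C.erase e

/-- The edge `e` closes the broken cycle `B`: `B ∪ {e}` is the edge set of a
δ-cycle in `G`. -/
def Closes (G : Hypergraph' α ι) (B : Finset ι) (e : ι) : Prop :=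
  ∃ V_C, IsSubgraph G.inc V_C (insert e B) G.verts G.edges ∧
    IsDeltaCycle G.inc V_C (insert e B)

/-- `e` is the minimal edge closing the broken cycle `B`, i.e. `e = e(B)`. -/
def IsMinCloser (G : Hypergraph' α ι) (B : Finset ι) (e : ι) : Prop :=
  G.Closes B e ∧ ∀ e', G.Closes B e' → e ≤ e'

/-- `e` is the maximal edge closing the broken cycle `B`, i.e. `e = ē(B)`. -/
def IsMaxCloser (G : Hypergraph' α ι) (B : Finset ι) (e : ι) : Prop :=
  G.Closes B e ∧ ∀ e', G.Closes B e' → e' ≤ e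

/-- `A` contains at least one broken cycle, and
`e = m(A) = min { e(B) : B ∈ 𝔅(G, <), B ⊆ A }`. -/
def IsMinClosingEdge (G : Hypergraph' α ι) (A : Finset ι) (e : ι) : Prop :=
  (∃ B, G.IsBrokenCycle B ∧ B ⊆ A ∧ G.IsMinCloser B e) ∧
    ∀ B e', G.IsBrokenCycle B → B ⊆ A → G.IsMinCloser B e' → e ≤ e'

end Order

end Hypergraph'

namespace Hypergraph'

variable {α ι : Type*}

lemma conn_symm (inc : ι → Finset α) (E' : Finset ι) : Symmetric (Conn inc E') :=
  by
    haveI : Std.Symm (fun a b => ∃ i ∈ E', a ∈ inc i ∧ b ∈ inc i) :=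
      ⟨fun _ _ ⟨i, hi, ha, hb⟩ => ⟨i, hi, hb, ha⟩⟩
    intro a b h
    exact Std.Symm.symm (r := Relation.ReflTransGen _) a b h

lemma conn_mono (inc : ι → Finset α) {E₁ E₂ : Finset ι} (h : E₁ ⊆ E₂) {a b : α}
    (hab : Conn inc E₁ a b) : Conn inc E₂ a b :=
  Relation.ReflTransGen.mono (fun _ _ ⟨i, hi, ha, hb⟩ => ⟨i, h hi, ha, hb⟩) _ _ hab

/-- If removing doesn't change the component count, connectivity is preserved. -/
lemma conn_of_numComponents_eq (inc : ι → Finset α) (V : Finset α) {E₁ E₂ : Finset ι}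
    (hE : E₁ ⊆ E₂) (hcard : numComponents inc V E₂ = numComponents inc V E₁)
    {a b : α} (ha : a ∈ V) (hb : b ∈ V) (hab : Conn inc E₂ a b) : Conn inc E₁ a b := by
  classical
  set f : α → Finset α := fun v => V.filter fun u => Conn inc E₁ u v with hf
  set g : α → Finset α := fun v => V.filter fun u => Conn inc E₂ u v with hg
  set φ : Finset α → Finset α := fun S => V.filter fun u => ∃ v ∈ S, Conn inc E₂ u v with hφ
  have hφf : ∀ v ∈ V, φ (f v) = g v := by
    intro v hv
    ext u
    simp only [hφ, hf, hg, Finset.mem_filter]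
    constructor
    · rintro ⟨hu, w, hw, huw⟩
      exact ⟨hu, huw.trans (conn_mono inc hE hw.2)⟩
    · rintro ⟨hu, huv⟩
      exact ⟨hu, v, ⟨hv, Relation.ReflTransGen.refl⟩, huv⟩
  have himg : V.image g = (V.image f).image φ := by
    rw [Finset.image_image]
    exact (Finset.image_congr (fun x hx => (hφf x hx).symm))
  simp only [numComponents] at hcard
  rw [← hf, ← hg] at hcard
  have hcard' : ((V.image f).image φ).card = (V.image f).card := by
    rw [← himg]
    exact hcard
  have hinj : Set.InjOn φ (V.image f) := Finset.injOn_of_card_image_eq hcard'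
  have hga : g a = g b := by
    ext u
    simp only [hg, Finset.mem_filter, and_congr_right_iff]
    intro _
    exact ⟨fun h => h.trans hab, fun h => h.trans (conn_symm inc E₂ hab)⟩
  have hfa : f a = f b := by
    apply hinj (Finset.mem_image_of_mem f ha) (Finset.mem_image_of_mem f hb)
    rw [hφf a ha, hφf b hb, hga]
  have : b ∈ f a := by
    rw [hfa]
    exact Finset.mem_filter.2 ⟨hb, Relation.ReflTransGen.refl⟩
  exact conn_symm inc E₁ (Finset.mem_filter.1 this).2

end Hypergraph'

open Hypergraph' in
/-- If `e ∉ A` and there is a δ-cycle `C = (V_C, E_C)` in `G` with `e ∈ E_C` and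
`E_C ⊆ A ∪ {e}`, then deleting `e` from the spanning subgraph `G[A ∪ {e}]` does not
change the number of connected components: `k(G[A]) = k(G[A ∪ {e}])`. -/
theorem numComponents_insert_of_deltaCycle {α ι : Type*} (G : Hypergraph' α ι)
    (A : Finset ι) (hA : A ⊆ G.edges) (e : ι) (he : e ∈ G.edges) (heA : e ∉ A)
    (V_C : Finset α) (E_C : Finset ι)
    (hsub : IsSubgraph G.inc V_C E_C G.verts G.edges)
    (hcyc : IsDeltaCycle G.inc V_C E_C)
    (heC : e ∈ E_C) (hEC : E_C ⊆ insert e A) :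
    numComponents G.inc G.verts A = numComponents G.inc G.verts (insert e A) := by
  classical
  -- The δ-cycle is its own minimal δ-cyclic witness
  obtain ⟨⟨V'', E'', hsub'', hne, hdel⟩, hmin⟩ := hcyc
  have heq : (V'', E'') = (V_C, E_C) := by
    by_contra h
    exact hmin V'' E'' hsub'' h
      ⟨V'', E'', ⟨Finset.Subset.refl _, Finset.Subset.refl _, hsub''.2.2⟩, hne, hdel⟩
  rw [Prod.mk.injEq] at heq
  obtain ⟨hV, hE⟩ := heq
  rw [hV, hE] at hdel hsub''
  have hincC : ∀ i ∈ E_C, G.inc i ⊆ V_C := hsub''.2.2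
  -- Endpoints of e are connected in E_C without e
  have hkey : ∀ a b, a ∈ G.inc e → b ∈ G.inc e → Conn G.inc (E_C.erase e) a b := by
    intro a b ha hb
    exact conn_of_numComponents_eq G.inc V_C (Finset.erase_subset _ _) (hdel e heC)
      (hincC e heC ha) (hincC e heC hb)
      (Relation.ReflTransGen.single ⟨e, heC, ha, hb⟩)
  have hErA : E_C.erase e ⊆ A := by
    intro i hi
    have hne' := Finset.ne_of_mem_erase hi
    have := hEC (Finset.mem_of_mem_erase hi)
    rcases Finset.mem_insert.1 this with h | h
    · exact absurd h hne'
    · exact h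
  -- Connectivity over A equals connectivity over insert e A
  have hconn : ∀ u v : α, Conn G.inc (insert e A) u v ↔ Conn G.inc A u v := by
    intro u v
    constructor
    · intro h
      induction h with
      | refl => exact Relation.ReflTransGen.refl
      | tail _ hstep ih =>
        rename_i x y _
        obtain ⟨i, hi, hx, hy⟩ := hstep
        rcases Finset.mem_insert.1 hi with rfl | hiA
        · exact ih.trans (conn_mono G.inc hErA (hkey x y hx hy))
        · exact ih.tail ⟨i, hiA, hx, hy⟩
    · exact conn_mono G.inc (Finset.subset_insert _ _)
  unfold numComponents
  congr 1
  apply Finset.image_congr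
  intro v _
  ext u
  simp only [Finset.mem_filter, hconn]
end

section
/- Let G = (V, E) be a hypergraph with a linear order < on the edge set E. For a broken cycle B ∈ 𝔅(G, <), let e(B) denote the minimal edge (with respect to <) such that B ∪ {e(B)} is the edge set of a δ-cycle in G; for an edge subset A ⊆ E containing at least one broken cycle, let m(A) = min{e(B) : B ∈ 𝔅(G, <), B ⊆ A}. Then for every edge e₀ ∈ E and every natural number x, the sum of (-1)^{|A|} x^{k(G[A])} over all edge subsets A ⊆ E such that A contains at least one broken cycle and m(A) = e₀ equals 0 (as an integer). -/
open scoped Classical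

/-- A hypergraph with vertex type `α` and edges indexed by elements of `ι`
(the indexing allows parallel edges, i.e. a multiset of edges). Every edge is a
nonempty subset of the vertex set. -/
structure DHypergraph (α ι : Type*) where
  verts : Finset α
  edges : Finset ι
  inc : ι → Finset α
  inc_nonempty : ∀ i ∈ edges, (inc i).Nonempty
  inc_sub : ∀ i ∈ edges, inc i ⊆ verts

namespace DHypergraph

variable {α ι : Type*}

/-- `u` and `v` are connected via a sequence of edges from `E'` in which consecutive
edges share a vertex. -/
def Conn (inc : ι → Finset α) (E' : Finset ι) (u v : α) : Prop :=
  Relation.ReflTransGen (fun a b => ∃ i ∈ E', a ∈ inc i ∧ b ∈ inc i) u v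

/-- The number of connected components of the hypergraph with vertex set `V'` and
edge set `E'` (isolated vertices form their own components). -/
noncomputable def numComponents (inc : ι → Finset α) (V' : Finset α) (E' : Finset ι) : ℕ :=
  (V'.image fun v => V'.filter fun u => Conn inc E' u v).card

/-- `(V₁, E₁)` is a subgraph of `(V₂, E₂)` (w.r.t. the incidence function `inc`). -/
def IsSubgraph (inc : ι → Finset α) (V₁ : Finset α) (E₁ : Finset ι)
    (V₂ : Finset α) (E₂ : Finset ι) : Prop :=
  V₁ ⊆ V₂ ∧ E₁ ⊆ E₂ ∧ ∀ i ∈ E₁, inc i ⊆ V₁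

/-- The hypergraph `(V', E')` is δ-cyclic: it has a subgraph with at least one edge
such that deleting any of its edges does not change the number of connected
components. -/
def IsDeltaCyclic (inc : ι → Finset α) (V' : Finset α) (E' : Finset ι) : Prop :=
  ∃ V'' E'', IsSubgraph inc V'' E'' V' E' ∧ E''.Nonempty ∧
    ∀ i ∈ E'', numComponents inc V'' E'' = numComponents inc V'' (E''.erase i)

/-- The hypergraph `(V', E')` is a δ-cycle: it is δ-cyclic and has no proper
δ-cyclic subgraph. -/
def IsDeltaCycle (inc : ι → Finset α) (V' : Finset α) (E' : Finset ι) : Prop :=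
  IsDeltaCyclic inc V' E' ∧
    ∀ V'' E'', IsSubgraph inc V'' E'' V' E' → (V'', E'') ≠ (V', E') →
      ¬ IsDeltaCyclic inc V'' E''

/-- A proper coloring of `G` with colors in `Fin x`: no edge has all its vertices
mapped to the same color. -/
def ProperColoring (G : DHypergraph α ι) (x : ℕ) (φ : G.verts → Fin x) : Prop :=
  ∀ i ∈ G.edges, ¬ ∃ c : Fin x, ∀ v : G.verts, (v : α) ∈ G.inc i → φ v = c

/-- The number of proper `x`-colorings of `G`, i.e. the value `χ(G, x)` of the
chromatic polynomial. -/
noncomputable def chromaticCount (G : DHypergraph α ι) (x : ℕ) : ℕ :=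
  Nat.card {φ : G.verts → Fin x // G.ProperColoring x φ}

section Order

variable [LinearOrder ι]

/-- `B` is a broken cycle of `G` w.r.t. the linear order on edges: `B` arises from
deleting the maximal edge of (the edge set of) a δ-cycle that is a subgraph of `G`. -/
def IsBrokenCycle (G : DHypergraph α ι) (B : Finset ι) : Prop :=
  ∃ V_C E_C e, IsSubgraph G.inc V_C E_C G.verts G.edges ∧
    IsDeltaCycle G.inc V_C E_C ∧ e ∈ E_C ∧ (∀ i ∈ E_C, i ≤ e) ∧ B = E_C.erase e

/-- The edge `e` closes the broken cycle `B`: `B ∪ {e}` is the edge set of a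
δ-cycle in `G`. -/
def Closes (G : DHypergraph α ι) (B : Finset ι) (e : ι) : Prop :=
  ∃ V_C, IsSubgraph G.inc V_C (insert e B) G.verts G.edges ∧
    IsDeltaCycle G.inc V_C (insert e B)

/-- `e` is the minimal edge closing the broken cycle `B`, i.e. `e = e(B)`. -/
def IsMinCloser (G : DHypergraph α ι) (B : Finset ι) (e : ι) : Prop :=
  G.Closes B e ∧ ∀ e', G.Closes B e' → e ≤ e'

/-- `e` is the maximal edge closing the broken cycle `B`, i.e. `e = ē(B)`. -/
def IsMaxCloser (G : DHypergraph α ι) (B : Finset ι) (e : ι) : Prop :=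
  G.Closes B e ∧ ∀ e', G.Closes B e' → e' ≤ e

/-- `A` contains at least one broken cycle, and
`e = m(A) = min { e(B) : B ∈ 𝔅(G, <), B ⊆ A }`. -/
def IsMinClosingEdge (G : DHypergraph α ι) (A : Finset ι) (e : ι) : Prop :=
  (∃ B, G.IsBrokenCycle B ∧ B ⊆ A ∧ G.IsMinCloser B e) ∧
    ∀ B e', G.IsBrokenCycle B → B ⊆ A → G.IsMinCloser B e' → e ≤ e'

end Order

end DHypergraph

/-! ### Auxiliary lemmas -/

namespace DHypergraph

variable {α ι : Type*}

section ConnAux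

variable {inc : ι → Finset α}

theorem conn_mono {E₁ E₂ : Finset ι} (h : E₁ ⊆ E₂) {u v : α}
    (hc : Conn inc E₁ u v) : Conn inc E₂ u v :=
  Relation.ReflTransGen.mono (fun _ _ ⟨i, hi, ha, hb⟩ => ⟨i, h hi, ha, hb⟩) _ _ hc

theorem conn_symm {E' : Finset ι} {u v : α} (h : Conn inc E' u v) : Conn inc E' v u :=
  haveI : Std.Symm (fun a b : α => ∃ i ∈ E', a ∈ inc i ∧ b ∈ inc i) :=
    ⟨fun _ _ ⟨i, hi, ha, hb⟩ => ⟨i, hi, hb, ha⟩⟩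
  (Relation.ReflTransGen.stdSymm (r := fun a b : α => ∃ i ∈ E', a ∈ inc i ∧ b ∈ inc i)).symm _ _ h

theorem conn_single {E' : Finset ι} {i : ι} (hi : i ∈ E') {a b : α}
    (ha : a ∈ inc i) (hb : b ∈ inc i) : Conn inc E' a b :=
  Relation.ReflTransGen.single ⟨i, hi, ha, hb⟩

/-- If the connectivity relations agree on `V'`, the component counts agree. -/
theorem numComponents_congr {V' : Finset α} {E₁ E₂ : Finset ι}
    (h : ∀ u ∈ V', ∀ v ∈ V', (Conn inc E₁ u v ↔ Conn inc E₂ u v)) :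
    numComponents inc V' E₁ = numComponents inc V' E₂ := by
  unfold numComponents
  congr 1
  apply Finset.image_congr
  intro v hv
  apply Finset.filter_congr
  intro u hu
  exact h u hu v hv

/-- If deleting edges from `E₂` down to `E₁` does not change the number of components
of `(V', ·)`, then connectivity between vertices of `V'` is unchanged. -/
theorem conn_of_numComponents_eq {V' : Finset α} {E₁ E₂ : Finset ι} (hsub : E₁ ⊆ E₂)
    (hcard : numComponents inc V' E₂ = numComponents inc V' E₁)
    {u v : α} (hu : u ∈ V') (hv : v ∈ V') (h : Conn inc E₂ u v) : Conn inc E₁ u v := by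
  classical
  set f₁ : α → Finset α := fun v => V'.filter fun u => Conn inc E₁ u v with hf₁
  set f₂ : α → Finset α := fun v => V'.filter fun u => Conn inc E₂ u v with hf₂
  set Φ : Finset α → Finset α := fun S => V'.filter fun u => ∃ w ∈ S, Conn inc E₂ u w with hΦdef
  have hΦ : ∀ w ∈ V', Φ (f₁ w) = f₂ w := by
    intro w hw
    ext z
    simp only [hΦdef, hf₁, hf₂, Finset.mem_filter]
    constructor
    · rintro ⟨hz, y, hy, hzy⟩
      exact ⟨hz, hzy.trans (conn_mono hsub hy.2)⟩
    · rintro ⟨hz, hzw⟩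
      exact ⟨hz, w, ⟨hw, Relation.ReflTransGen.refl⟩, hzw⟩
  have himg : V'.image f₂ = (V'.image f₁).image Φ := by
    rw [Finset.image_image]
    apply Finset.image_congr
    intro w hw
    exact (hΦ w hw).symm
  have hinj : Set.InjOn Φ (V'.image f₁) := by
    apply Finset.injOn_of_card_image_eq
    rw [← himg]
    exact hcard
  have key : f₁ u = f₁ v := by
    apply hinj (Finset.mem_image_of_mem f₁ hu) (Finset.mem_image_of_mem f₁ hv)
    rw [hΦ u hu, hΦ v hv]
    ext z
    simp only [hf₂, Finset.mem_filter]
    constructor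
    · rintro ⟨hz, hzu⟩; exact ⟨hz, hzu.trans h⟩
    · rintro ⟨hz, hzv⟩; exact ⟨hz, hzv.trans (conn_symm h)⟩
  have : u ∈ f₁ u := Finset.mem_filter.2 ⟨hu, Relation.ReflTransGen.refl⟩
  rw [key] at this
  exact (Finset.mem_filter.1 this).2

end ConnAux

variable [LinearOrder ι] {G : DHypergraph α ι}

/-- The edge set of a δ-cycle closing `B` is contained in `G.edges`. -/
theorem Closes.subset_edges {B : Finset ι} {e : ι} (h : G.Closes B e) :
    insert e B ⊆ G.edges := by
  obtain ⟨V_C, hsub, _⟩ := h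
  exact hsub.2.1

/-- Any edge closing a broken cycle `B` has its vertices connected through `B`. -/
theorem Closes.conn {B : Finset ι} {e : ι} (h : G.Closes B e) :
    ∀ a ∈ G.inc e, ∀ b ∈ G.inc e, Conn G.inc B a b := by
  obtain ⟨V_C, hsub, hcyc, hmin⟩ := h
  -- the δ-cyclic witness must be the whole δ-cycle
  obtain ⟨V'', E'', hsub'', hne'', hprop''⟩ := hcyc
  have heq : (V'', E'') = (V_C, insert e B) := by
    by_contra hne
    exact hmin V'' E'' hsub'' hne ⟨V'', E'', ⟨le_refl V'', le_refl E'', hsub''.2.2⟩, hne'', hprop''⟩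
  rw [Prod.mk.injEq] at heq
  obtain ⟨hV, hE⟩ := heq
  intro a ha b hb
  have he'' : e ∈ E'' := by rw [hE]; exact Finset.mem_insert.mpr (Or.inl rfl)
  have hcount := hprop'' e he''
  have hincV : G.inc e ⊆ V'' := hsub''.2.2 e he''
  have hconn2 : Conn G.inc E'' a b := conn_single he'' ha hb
  refine conn_mono ?_ (conn_of_numComponents_eq ?_ hcount (hincV ha) (hincV hb) hconn2)
  · intro i hi
    simp only [Finset.mem_erase] at hi
    obtain ⟨hne, hins⟩ := hi
    rw [hE] at hins
    exact (Finset.mem_insert.1 hins).resolve_left hne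
  · intro i hi
    simp only [Finset.mem_erase] at hi
    exact hi.2

/-- A broken cycle is contained in `G.edges`. -/
theorem IsBrokenCycle.subset_edges {B : Finset ι} (h : G.IsBrokenCycle B) :
    B ⊆ G.edges := by
  obtain ⟨V_C, E_C, e, hsub, _, he, _, rfl⟩ := h
  exact (Finset.erase_subset _ _).trans hsub.2.1

/-- A broken cycle has a closer which is larger than all its members. -/
theorem IsBrokenCycle.exists_closer_gt {B : Finset ι} (h : G.IsBrokenCycle B) :
    ∃ e, G.Closes B e ∧ ∀ i ∈ B, i < e := by
  obtain ⟨V_C, E_C, e, hsub, hcyc, he, hmax, rfl⟩ := h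
  refine ⟨e, ⟨V_C, ?_, ?_⟩, ?_⟩
  · rw [Finset.insert_erase he]
    exact hsub
  · rw [Finset.insert_erase he]
    exact hcyc
  · intro i hi
    rw [Finset.mem_erase] at hi
    exact lt_of_le_of_ne (hmax i hi.2) hi.1

/-- Stripping edges whose vertices are connected through `A` preserves connectivity. -/
theorem conn_strip {A A' : Finset ι}
    (H : ∀ i ∈ A', ∀ a ∈ G.inc i, ∀ b ∈ G.inc i, Conn G.inc A a b)
    {u v : α} (h : Conn G.inc A' u v) : Conn G.inc A u v := by
  induction h with
  | refl => exact Relation.ReflTransGen.refl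
  | tail _ step ih =>
    obtain ⟨i, hi, hb, hc⟩ := step
    exact ih.trans (H i hi _ hb _ hc)

/-- If the vertices of edge `g` are connected through `A`, then inserting `g` does not
change the number of connected components. -/
theorem numComponents_insert_eq {A : Finset ι} {g : ι}
    (H : ∀ a ∈ G.inc g, ∀ b ∈ G.inc g, Conn G.inc A a b) :
    numComponents G.inc G.verts (insert g A) = numComponents G.inc G.verts A := by
  apply numComponents_congr
  intro u _ v _
  constructor
  · refine fun h => conn_strip ?_ h
    intro i hi a ha b hb
    rcases Finset.mem_insert.1 hi with rfl | hiA
    · exact H a ha b hb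
    · exact conn_single hiA ha hb
  · exact conn_mono (Finset.subset_insert g A)

/-- The interval sum `∑_{U ⊆ A ⊆ E}` vanishes if some edge outside `U` has its
vertices connected through `U`. -/
theorem sum_interval_eq_zero (U : Finset ι) (g : ι) (hg : g ∈ G.edges) (hgU : g ∉ U)
    (H : ∀ a ∈ G.inc g, ∀ b ∈ G.inc g, Conn G.inc U a b) (x : ℕ) :
    ∑ A ∈ G.edges.powerset.filter fun A => U ⊆ A,
      (-1 : ℤ) ^ A.card * (x : ℤ) ^ numComponents G.inc G.verts A = 0 := by
  classical
  have key : ∀ A : Finset ι, U ⊆ A → g ∉ A →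
      (-1 : ℤ) ^ (insert g A).card * (x : ℤ) ^ numComponents G.inc G.verts (insert g A) =
      -((-1 : ℤ) ^ A.card * (x : ℤ) ^ numComponents G.inc G.verts A) := by
    intro A hUA hgA
    have hk : numComponents G.inc G.verts (insert g A) = numComponents G.inc G.verts A :=
      numComponents_insert_eq (fun a ha b hb => conn_mono hUA (H a ha b hb))
    have hc : (insert g A).card = A.card + 1 := Finset.card_insert_of_notMem hgA
    rw [hk, hc, pow_succ]
    ring
  apply Finset.sum_involution
    (g := fun A _ => if g ∈ A then A.erase g else insert g A)
  · -- f a + f (σ a) = 0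
    intro A hA
    rw [Finset.mem_filter, Finset.mem_powerset] at hA
    by_cases hgA : g ∈ A
    · simp only [if_pos hgA]
      have hU' : U ⊆ A.erase g := Finset.subset_erase.2 ⟨hA.2, hgU⟩
      have hkey := key (A.erase g) hU' (Finset.notMem_erase g A)
      rw [Finset.insert_erase hgA] at hkey
      rw [hkey]; ring
    · simp only [if_neg hgA]
      rw [key A hA.2 hgA]; ring
  · -- σ a ≠ a when f a ≠ 0
    intro A _ _
    by_cases hgA : g ∈ A
    · simp only [if_pos hgA]
      intro hcon
      apply Finset.notMem_erase g A
      rw [hcon]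
      exact hgA
    · simp only [if_neg hgA]
      intro hcon
      apply hgA
      rw [← hcon]
      exact Finset.mem_insert_self g A
  · -- involutive
    intro A hA
    by_cases hgA : g ∈ A
    · simp only [if_pos hgA]
      rw [if_neg (Finset.notMem_erase g A), Finset.insert_erase hgA]
    · simp only [if_neg hgA]
      rw [if_pos (Finset.mem_insert_self g A), Finset.erase_insert hgA]
  · -- σ a ∈ s
    intro A hA
    rw [Finset.mem_filter, Finset.mem_powerset] at hA
    by_cases hgA : g ∈ A
    · simp only [if_pos hgA]
      rw [Finset.mem_filter, Finset.mem_powerset]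
      exact ⟨(Finset.erase_subset g A).trans hA.1, Finset.subset_erase.2 ⟨hA.2, hgU⟩⟩
    · simp only [if_neg hgA]
      rw [Finset.mem_filter, Finset.mem_powerset]
      exact ⟨Finset.insert_subset hg hA.1, hA.2.trans (Finset.subset_insert g A)⟩

/-- `U` is a nonempty-coverable union of broken cycles. -/
def GoodUnion (G : DHypergraph α ι) (U : Finset ι) : Prop :=
  U ⊆ G.edges ∧ (∃ B, G.IsBrokenCycle B ∧ B ⊆ U) ∧
    ∀ g ∈ U, ∃ B, G.IsBrokenCycle B ∧ B ⊆ U ∧ g ∈ B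

theorem GoodUnion.sum_zero {U : Finset ι} (hU : G.GoodUnion U) (x : ℕ) :
    ∑ A ∈ G.edges.powerset.filter fun A => U ⊆ A,
      (-1 : ℤ) ^ A.card * (x : ℤ) ^ numComponents G.inc G.verts A = 0 := by
  classical
  obtain ⟨hUE, ⟨B₀, hB₀, hB₀U⟩, hcover⟩ := hU
  -- the set of all closers of all broken cycles inside U
  set T : Finset ι := G.edges.filter
    (fun g => ∃ B, G.IsBrokenCycle B ∧ B ⊆ U ∧ G.Closes B g) with hT
  have hTne : T.Nonempty := by
    obtain ⟨e, he, _⟩ := hB₀.exists_closer_gt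
    exact ⟨e, Finset.mem_filter.2 ⟨he.subset_edges (Finset.mem_insert_self e B₀),
      B₀, hB₀, hB₀U, he⟩⟩
  set g := T.max' hTne with hgdef
  have hgT : g ∈ T := T.max'_mem hTne
  rw [hT, Finset.mem_filter] at hgT
  obtain ⟨hgE, B, hB, hBU, hBg⟩ := hgT
  have hgU : g ∉ U := by
    intro hgU
    obtain ⟨B', hB', hB'U, hgB'⟩ := hcover g hgU
    obtain ⟨e', he', hlt⟩ := hB'.exists_closer_gt
    have he'T : e' ∈ T := Finset.mem_filter.2
      ⟨he'.subset_edges (Finset.mem_insert_self e' B'), B', hB', hB'U, he'⟩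
    exact absurd (T.le_max' e' he'T) (not_le.2 (hlt g hgB'))
  exact sum_interval_eq_zero U g hgE hgU
    (fun a ha b hb => conn_mono hBU (hBg.conn a ha b hb)) x

/-- The sum over the up-closure of a family of good unions vanishes. -/
theorem sum_upclosure_eq_zero (x : ℕ) :
    ∀ (n : ℕ) (𝔊 : Finset (Finset ι)), 𝔊.card = n → (∀ U ∈ 𝔊, G.GoodUnion U) →
    ∑ A ∈ G.edges.powerset.filter fun A => ∃ U ∈ 𝔊, U ⊆ A,
      (-1 : ℤ) ^ A.card * (x : ℤ) ^ numComponents G.inc G.verts A = 0 := by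
  intro n
  induction n using Nat.strong_induction_on with
  | _ n ih =>
    intro 𝔊 hcard hgood
    rcases 𝔊.eq_empty_or_nonempty with rfl | ⟨U₀, hU₀⟩
    · rw [Finset.filter_false_of_mem, Finset.sum_empty]
      intro A _
      simp
    · have hgood₀ := hgood U₀ hU₀
      set 𝔊' := 𝔊.erase U₀ with h𝔊'
      set 𝔊'' := 𝔊'.image (fun U => U ∪ U₀) with h𝔊''
      have hc' : 𝔊'.card < n := by
        rw [← hcard]
        exact Finset.card_erase_lt_of_mem hU₀
      have hc'' : 𝔊''.card < n := lt_of_le_of_lt (Finset.card_image_le) hc'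
      have hgood' : ∀ U ∈ 𝔊', G.GoodUnion U :=
        fun U hU => hgood U (Finset.mem_of_mem_erase hU)
      have hgood'' : ∀ U ∈ 𝔊'', G.GoodUnion U := by
        intro V hV
        rw [h𝔊'', Finset.mem_image] at hV
        obtain ⟨U, hU, rfl⟩ := hV
        obtain ⟨h1, h2, h3⟩ := hgood' U hU
        obtain ⟨h1₀, h2₀, h3₀⟩ := hgood₀
        refine ⟨Finset.union_subset h1 h1₀, ?_, ?_⟩
        · obtain ⟨B, hB, hBU⟩ := h2
          exact ⟨B, hB, hBU.trans Finset.subset_union_left⟩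
        · intro e he
          rcases Finset.mem_union.1 he with he | he
          · obtain ⟨B, hB, hBU, heB⟩ := h3 e he
            exact ⟨B, hB, hBU.trans Finset.subset_union_left, heB⟩
          · obtain ⟨B, hB, hBU, heB⟩ := h3₀ e he
            exact ⟨B, hB, hBU.trans Finset.subset_union_right, heB⟩
      -- split the filter
      have hsplit : G.edges.powerset.filter (fun A => ∃ U ∈ 𝔊, U ⊆ A) =
          (G.edges.powerset.filter fun A => U₀ ⊆ A) ∪
          (G.edges.powerset.filter fun A => ∃ U ∈ 𝔊', U ⊆ A) := by
        rw [← Finset.filter_or]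
        apply Finset.filter_congr
        intro A _
        constructor
        · rintro ⟨U, hU, hUA⟩
          rcases eq_or_ne U U₀ with rfl | hne
          · exact Or.inl hUA
          · exact Or.inr ⟨U, Finset.mem_erase.2 ⟨hne, hU⟩, hUA⟩
        · rintro (h | ⟨U, hU, hUA⟩)
          · exact ⟨U₀, hU₀, h⟩
          · exact ⟨U, Finset.mem_of_mem_erase hU, hUA⟩
      have hinter : (G.edges.powerset.filter fun A => U₀ ⊆ A) ∩
          (G.edges.powerset.filter fun A => ∃ U ∈ 𝔊', U ⊆ A) =
          (G.edges.powerset.filter fun A => ∃ U ∈ 𝔊'', U ⊆ A) := by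
        rw [← Finset.filter_and]
        apply Finset.filter_congr
        intro A _
        constructor
        · rintro ⟨h₀, U, hU, hUA⟩
          exact ⟨U ∪ U₀, Finset.mem_image_of_mem _ hU, Finset.union_subset hUA h₀⟩
        · rintro ⟨V, hV, hVA⟩
          rw [h𝔊'', Finset.mem_image] at hV
          obtain ⟨U, hU, rfl⟩ := hV
          exact ⟨Finset.subset_union_right.trans hVA, U,
            hU, Finset.subset_union_left.trans hVA⟩
      have hsum := Finset.sum_union_inter
        (s₁ := G.edges.powerset.filter fun A => U₀ ⊆ A)
        (s₂ := G.edges.powerset.filter fun A => ∃ U ∈ 𝔊', U ⊆ A)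
        (f := fun A => (-1 : ℤ) ^ A.card * (x : ℤ) ^ numComponents G.inc G.verts A)
      rw [hsplit]
      rw [hinter] at hsum
      rw [ih 𝔊'.card hc' 𝔊' rfl hgood', ih 𝔊''.card hc'' 𝔊'' rfl hgood'',
        hgood₀.sum_zero x] at hsum
      linarith

end DHypergraph

open DHypergraph in
/-- The summands of the edge subset expansion over all `A ⊆ E` containing a broken
cycle with `m(A) = e₀` cancel:
`Σ_{A ⊆ E, m(A) = e₀} (-1)^{|A|} x^{k(G[A])} = 0`. -/
theorem sum_isMinClosingEdge_eq_zero {α ι : Type*} [LinearOrder ι]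
    (G : DHypergraph α ι) (e₀ : ι) (he₀ : e₀ ∈ G.edges) (x : ℕ) :
    ∑ A ∈ G.edges.powerset.filter fun A => G.IsMinClosingEdge A e₀,
      (-1 : ℤ) ^ A.card * (x : ℤ) ^ numComponents G.inc G.verts A = 0 := by
  classical
  set W : Finset ι → ℤ :=
    fun A => (-1 : ℤ) ^ A.card * (x : ℤ) ^ numComponents G.inc G.verts A with hW
  -- the families of broken cycles with minimal closer ≤ e₀ resp. < e₀
  set 𝔉le : Finset (Finset ι) := G.edges.powerset.filter
    (fun B => G.IsBrokenCycle B ∧ ∃ e', G.IsMinCloser B e' ∧ e' ≤ e₀) with h𝔉le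
  set 𝔉lt : Finset (Finset ι) := G.edges.powerset.filter
    (fun B => G.IsBrokenCycle B ∧ ∃ e', G.IsMinCloser B e' ∧ e' < e₀) with h𝔉lt
  have hgood : ∀ (𝔉 : Finset (Finset ι)), (∀ B ∈ 𝔉, G.IsBrokenCycle B) →
      ∀ U ∈ 𝔉, G.GoodUnion U := by
    intro 𝔉 h U hU
    exact ⟨(h U hU).subset_edges, ⟨U, h U hU, le_refl U⟩,
      fun g hg => ⟨U, h U hU, le_refl U, hg⟩⟩
  have hble : ∀ B ∈ 𝔉le, G.IsBrokenCycle B := by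
    intro B hB; exact ((Finset.mem_filter.1 hB).2).1
  have hblt : ∀ B ∈ 𝔉lt, G.IsBrokenCycle B := by
    intro B hB; exact ((Finset.mem_filter.1 hB).2).1
  have hle0 : ∑ A ∈ G.edges.powerset.filter fun A => ∃ U ∈ 𝔉le, U ⊆ A, W A = 0 :=
    sum_upclosure_eq_zero x 𝔉le.card 𝔉le rfl (hgood 𝔉le hble)
  have hlt0 : ∑ A ∈ G.edges.powerset.filter fun A => ∃ U ∈ 𝔉lt, U ⊆ A, W A = 0 :=
    sum_upclosure_eq_zero x 𝔉lt.card 𝔉lt rfl (hgood 𝔉lt hblt)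
  -- membership characterizations
  have hPle : ∀ A, (∃ U ∈ 𝔉le, U ⊆ A) ↔
      ∃ B e', G.IsBrokenCycle B ∧ B ⊆ A ∧ G.IsMinCloser B e' ∧ e' ≤ e₀ := by
    intro A
    constructor
    · rintro ⟨U, hU, hUA⟩
      obtain ⟨hbr, e', hmc, hle⟩ := (Finset.mem_filter.1 hU).2
      exact ⟨U, e', hbr, hUA, hmc, hle⟩
    · rintro ⟨B, e', hbr, hBA, hmc, hle⟩
      exact ⟨B, Finset.mem_filter.2 ⟨Finset.mem_powerset.2 hbr.subset_edges,
        hbr, e', hmc, hle⟩, hBA⟩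
  have hPlt : ∀ A, (∃ U ∈ 𝔉lt, U ⊆ A) ↔
      ∃ B e', G.IsBrokenCycle B ∧ B ⊆ A ∧ G.IsMinCloser B e' ∧ e' < e₀ := by
    intro A
    constructor
    · rintro ⟨U, hU, hUA⟩
      obtain ⟨hbr, e', hmc, hlt⟩ := (Finset.mem_filter.1 hU).2
      exact ⟨U, e', hbr, hUA, hmc, hlt⟩
    · rintro ⟨B, e', hbr, hBA, hmc, hlt⟩
      exact ⟨B, Finset.mem_filter.2 ⟨Finset.mem_powerset.2 hbr.subset_edges,
        hbr, e', hmc, hlt⟩, hBA⟩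
  -- the split of the ≤-class into the =-class and the <-class
  have hsplit : G.edges.powerset.filter (fun A => ∃ U ∈ 𝔉le, U ⊆ A) =
      (G.edges.powerset.filter fun A => G.IsMinClosingEdge A e₀) ∪
      (G.edges.powerset.filter fun A => ∃ U ∈ 𝔉lt, U ⊆ A) := by
    rw [← Finset.filter_or]
    apply Finset.filter_congr
    intro A _
    rw [hPle, hPlt]
    constructor
    · rintro ⟨B, e', hbr, hBA, hmc, hle⟩
      by_cases hex : ∃ B e', G.IsBrokenCycle B ∧ B ⊆ A ∧ G.IsMinCloser B e' ∧ e' < e₀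
      · exact Or.inr hex
      · push_neg at hex
        left
        have he'eq : e' = e₀ := le_antisymm hle (hex B e' hbr hBA hmc)
        refine ⟨⟨B, hbr, hBA, he'eq ▸ hmc⟩, ?_⟩
        intro B'' e'' hbr'' hBA'' hmc''
        exact hex B'' e'' hbr'' hBA'' hmc''
    · rintro (⟨⟨B, hbr, hBA, hmc⟩, _⟩ | ⟨B, e', hbr, hBA, hmc, hlt⟩)
      · exact ⟨B, e₀, hbr, hBA, hmc, le_refl e₀⟩
      · exact ⟨B, e', hbr, hBA, hmc, le_of_lt hlt⟩
  have hdisj : Disjoint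
      (G.edges.powerset.filter fun A => G.IsMinClosingEdge A e₀)
      (G.edges.powerset.filter fun A => ∃ U ∈ 𝔉lt, U ⊆ A) := by
    rw [Finset.disjoint_left]
    intro A hA hA'
    obtain ⟨_, hmin⟩ := (Finset.mem_filter.1 hA).2
    obtain ⟨B, e', hbr, hBA, hmc, hlt⟩ := (hPlt A).1 (Finset.mem_filter.1 hA').2
    exact absurd (hmin B e' hbr hBA hmc) (not_le.2 hlt)
  rw [hsplit, Finset.sum_union hdisj] at hle0
  rw [hlt0, add_zero] at hle0
  exact hle0
end

section
/- Let G = (V, E) be a hypergraph with a linear order < on the edge set E. For a broken cycle B ∈ 𝔅(G, <), let ē(B) denote the maximal edge (with respect to <) such that B ∪ {ē(B)} is the edge set of a δ-cycle in G. Let 𝒟' ⊆ 𝔅(G, <) and let B ∈ 𝔅(G, <) be a broken cycle such that ē(B) ≮ ē(B') for all B' ∈ 𝒟'. Then for every A ⊆ E with ē(B) ∉ A, the following are equivalent: (i) B ⊆ A and B' ⊄ A for all B' ∈ 𝒟'; (ii) B ⊆ A ∪ {ē(B)} and B' ⊄ A ∪ {ē(B)} for all B' ∈ 𝒟'. -/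
open scoped Classical

open Hypergraph' in
/-- Let `D'` be a set of broken cycles of `G` and let `B` be a broken cycle whose
maximal closing edge `ē(B)` satisfies `ē(B) ≮ ē(B')` for all `B' ∈ D'`. Then for
`A ⊆ E` with `ē(B) ∉ A`: `A` contains `B` and no member of `D'` iff `A ∪ {ē(B)}`
contains `B` and no member of `D'`. -/
theorem mem_insert_maxCloser_iff {α ι : Type*} [LinearOrder ι]
    (G : Hypergraph' α ι)
    (D' : Finset (Finset ι)) (hD' : ∀ B' ∈ D', G.IsBrokenCycle B')
    (B : Finset ι) (hB : G.IsBrokenCycle B)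
    (eB : ι) (heB : G.IsMaxCloser B eB)
    (hmax : ∀ B' ∈ D', ∀ e', G.IsMaxCloser B' e' → ¬ eB < e')
    (A : Finset ι) (hA : A ⊆ G.edges) (heA : eB ∉ A) :
    (B ⊆ A ∧ ∀ B' ∈ D', ¬ B' ⊆ A) ↔
      (B ⊆ insert eB A ∧ ∀ B' ∈ D', ¬ B' ⊆ insert eB A) := by
  obtain ⟨V_C, E_C, e, hsub, hcyc, heC, hemax, hBe⟩ := hB
  have hce : G.Closes B e :=
    ⟨V_C, by rw [hBe, Finset.insert_erase heC]; exact ⟨hsub, hcyc⟩⟩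
  have heBe : e ≤ eB := heB.2 e hce
  have heBB : eB ∉ B := by
    intro h
    rw [hBe] at h
    exact Finset.ne_of_mem_erase h
      (le_antisymm (hemax eB (Finset.mem_of_mem_erase h)) heBe)
  constructor
  · rintro ⟨h1, h2⟩
    refine ⟨h1.trans (Finset.subset_insert _ _), ?_⟩
    intro B' hB'D hB'sub
    by_cases hc : B' ⊆ A
    · exact h2 B' hB'D hc
    have heB' : eB ∈ B' := by
      by_contra h
      apply hc
      intro x hx
      rcases Finset.mem_insert.mp (hB'sub hx) with h1 | h1
      · exact absurd (h1 ▸ hx) h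
      · exact h1
    obtain ⟨V_C', E_C', e', hsub', hcyc', heC', hemax', hB'e⟩ := hD' B' hB'D
    have hce' : G.Closes B' e' :=
      ⟨V_C', by rw [hB'e, Finset.insert_erase heC']; exact ⟨hsub', hcyc'⟩⟩
    have hclos_edges : ∀ x, G.Closes B' x → x ∈ G.edges := by
      rintro x ⟨V, ⟨_, hEsub, _⟩, _⟩
      exact hEsub (Finset.mem_insert_self x B')
    set S := G.edges.filter (fun x => G.Closes B' x) with hS
    have hSne : S.Nonempty := ⟨e', Finset.mem_filter.mpr ⟨hclos_edges e' hce', hce'⟩⟩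
    have hmaxS : G.IsMaxCloser B' (S.max' hSne) := by
      refine ⟨(Finset.mem_filter.mp (S.max'_mem hSne)).2, fun x hx => ?_⟩
      exact S.le_max' x (Finset.mem_filter.mpr ⟨hclos_edges x hx, hx⟩)
    have hlt : eB < e' :=
      lt_of_le_of_ne (hemax' eB (Finset.mem_of_mem_erase (hB'e ▸ heB')))
        (Finset.ne_of_mem_erase (hB'e ▸ heB'))
    have hle : e' ≤ S.max' hSne :=
      S.le_max' e' (Finset.mem_filter.mpr ⟨hclos_edges e' hce', hce'⟩)
    exact hmax B' hB'D _ hmaxS (lt_of_lt_of_le hlt hle)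
  · rintro ⟨h1, h2⟩
    refine ⟨?_, fun B' hD hsub => h2 B' hD (hsub.trans (Finset.subset_insert _ _))⟩
    intro x hx
    rcases Finset.mem_insert.mp (h1 hx) with h | h
    · exact absurd (h ▸ hx) heBB
    · exact h
end
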